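/- Let k ∈ ℤ² ∖ {0}, ε ≠ 0, and H_ε(θ,R) = ⟨k,R⟩ + ε cos(⟨θ,k^⊥⟩) on 𝕋² × ℝ². If θ₀ ∈ 𝕋² satisfies sin(⟨θ₀, k^⊥⟩) = 1, then for any R₀ ∈ ℝ² the curve t ↦ (θ₀ + tk, R₀ + tε k^⊥) is a solution of the Hamiltonian system of H_ε, and its action component R₀ + tε k^⊥ is unbounded as t → ∞. -/

import Mathlib

open Real

/-- if `sin(⟨θ₀,k⊥⟩) = 1` then `t ↦ (θ₀ + tk, R₀ + tε k⊥)` is a solution of the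
Hamiltonian system of `H_ε(θ,R) = ⟨k,R⟩ + ε cos(⟨θ,k⊥⟩)` and its action component is
unbounded as `t → ∞`. -/
theorem stmt_6 (k : ℤ × ℤ) (hk : k ≠ 0) (ε : ℝ) (hε : ε ≠ 0)
    (H : (ℝ × ℝ) → (ℝ × ℝ) → ℝ)
    (hH : ∀ θ R : ℝ × ℝ,
      H θ R = ((k.1 : ℝ) * R.1 + (k.2 : ℝ) * R.2)
        + ε * Real.cos (θ.1 * (-(k.2 : ℝ)) + θ.2 * (k.1 : ℝ)))
    (θ₀ : ℝ × ℝ) (hθ₀ : Real.sin (θ₀.1 * (-(k.2 : ℝ)) + θ₀.2 * (k.1 : ℝ)) = 1)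
    (R₀ : ℝ × ℝ)
    (Θ Rf : ℝ → ℝ × ℝ)
    (hΘ : ∀ t, Θ t = (θ₀.1 + t * (k.1 : ℝ), θ₀.2 + t * (k.2 : ℝ)))
    (hR : ∀ t, Rf t = (R₀.1 + t * ε * (-(k.2 : ℝ)), R₀.2 + t * ε * (k.1 : ℝ))) :
    (∀ t : ℝ,
      deriv (fun s => (Θ s).1) t = deriv (fun r => H (Θ t) (r, (Rf t).2)) ((Rf t).1) ∧
      deriv (fun s => (Θ s).2) t = deriv (fun r => H (Θ t) ((Rf t).1, r)) ((Rf t).2) ∧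
      deriv (fun s => (Rf s).1) t = - deriv (fun a => H (a, (Θ t).2) (Rf t)) ((Θ t).1) ∧
      deriv (fun s => (Rf s).2) t = - deriv (fun a => H ((Θ t).1, a) (Rf t)) ((Θ t).2)) ∧
    (∀ A : ℝ, ∃ t : ℝ, A < ‖Rf t‖) := by
  have key : ∀ (c d x : ℝ), deriv (fun s : ℝ => c + s * d) x = d := fun c d x =>
    by simpa using (((hasDerivAt_id x).mul_const d).const_add c).deriv
  have keyP1 : ∀ (d c2 c3 x : ℝ), deriv (fun r : ℝ => (d * r + c2) + c3) x = d := fun d c2 c3 x =>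
    by simpa using ((((hasDerivAt_id x).const_mul d).add_const c2).add_const c3).deriv
  have keyP2 : ∀ (d c1 c3 x : ℝ), deriv (fun r : ℝ => (c1 + d * r) + c3) x = d := fun d c1 c3 x =>
    by simpa using ((((hasDerivAt_id x).const_mul d).const_add c1).add_const c3).deriv
  have keyC1 : ∀ (C b m x : ℝ),
      deriv (fun a : ℝ => C + ε * Real.cos (a * m + b)) x = ε * (-Real.sin (x * m + b) * m) :=
    fun C b m x =>
      by simpa using ((((((hasDerivAt_id x).mul_const m).add_const b).cos).const_mul ε).const_add C).deriv
  have keyC2 : ∀ (C b m x : ℝ),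
      deriv (fun a : ℝ => C + ε * Real.cos (b + a * m)) x = ε * (-Real.sin (b + x * m) * m) :=
    fun C b m x =>
      by simpa using ((((((hasDerivAt_id x).mul_const m).const_add b).cos).const_mul ε).const_add C).deriv
  constructor
  · intro t
    refine ⟨?_, ?_, ?_, ?_⟩
    · simp only [hΘ, hH]
      rw [key, keyP1]
    · simp only [hΘ, hH]
      rw [key, keyP2]
    · simp only [hΘ, hR, hH]
      have h1 : ∀ s : ℝ, R₀.1 + s * ε * (-(k.2:ℝ)) = R₀.1 + s * (ε * (-(k.2:ℝ))) := by
        intro s; ring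
      simp only [h1]
      rw [key, keyC1]
      have hang : (θ₀.1 + t * (k.1:ℝ)) * (-(k.2:ℝ)) + (θ₀.2 + t * (k.2:ℝ)) * (k.1:ℝ)
          = θ₀.1 * (-(k.2:ℝ)) + θ₀.2 * (k.1:ℝ) := by ring
      rw [hang, hθ₀]; ring
    · simp only [hΘ, hR, hH]
      have h1 : ∀ s : ℝ, R₀.2 + s * ε * (k.1:ℝ) = R₀.2 + s * (ε * (k.1:ℝ)) := by
        intro s; ring
      simp only [h1]
      rw [key, keyC2]
      have hang : (θ₀.1 + t * (k.1:ℝ)) * (-(k.2:ℝ)) + (θ₀.2 + t * (k.2:ℝ)) * (k.1:ℝ)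
          = θ₀.1 * (-(k.2:ℝ)) + θ₀.2 * (k.1:ℝ) := by ring
      rw [hang, hθ₀]; ring
  · intro A
    rcases (by
      by_cases h1 : k.1 = 0
      · right; intro h2; exact hk (Prod.ext h1 h2)
      · left; exact h1 : k.1 ≠ 0 ∨ k.2 ≠ 0) with h1 | h2
    · -- use second component
      have hk1 : ((k.1:ℝ)) ≠ 0 := Int.cast_ne_zero.mpr h1
      set t := (A + |R₀.2| + 1) / (ε * (k.1:ℝ)) with ht
      refine ⟨t, ?_⟩
      have hval : t * ε * (k.1:ℝ) = A + |R₀.2| + 1 := by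
        rw [ht, div_mul_eq_mul_div, div_mul_eq_mul_div, div_eq_iff (mul_ne_zero hε hk1)]
        ring
      have : A < |R₀.2 + t * ε * (k.1:ℝ)| := by
        rw [hval]
        calc A < A + (|R₀.2| + R₀.2) + 1 := by
                have := abs_nonneg R₀.2
                have := neg_abs_le R₀.2
                linarith
          _ = R₀.2 + (A + |R₀.2| + 1) := by ring
          _ ≤ |R₀.2 + (A + |R₀.2| + 1)| := le_abs_self _
      calc A < |R₀.2 + t * ε * (k.1:ℝ)| := this
        _ ≤ ‖Rf t‖ := by
            rw [hR]
            exact le_max_right _ _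
    · have hk2 : (-(k.2:ℝ)) ≠ 0 := by simpa using h2
      set t := (A + |R₀.1| + 1) / (ε * (-(k.2:ℝ))) with ht
      refine ⟨t, ?_⟩
      have hval : t * ε * (-(k.2:ℝ)) = A + |R₀.1| + 1 := by
        rw [ht, div_mul_eq_mul_div, div_mul_eq_mul_div, div_eq_iff (mul_ne_zero hε hk2)]
        ring
      have : A < |R₀.1 + t * ε * (-(k.2:ℝ))| := by
        rw [hval]
        calc A < A + (|R₀.1| + R₀.1) + 1 := by
                have := abs_nonneg R₀.1
                have := neg_abs_le R₀.1
                linarith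
          _ = R₀.1 + (A + |R₀.1| + 1) := by ring
          _ ≤ |R₀.1 + (A + |R₀.1| + 1)| := le_abs_self _
      calc A < |R₀.1 + t * ε * (-(k.2:ℝ))| := this
        _ ≤ ‖Rf t‖ := by
            rw [hR]
            exact le_max_left _ _
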